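/- (Convergence with convenient probabilities, one-step expected decrease.) Let A be a p×m real matrix and B an n×q real matrix. Let S_1,…,S_{r₁} with S_i a p×τ₁(i) real matrix be such that S_iᵀA has full row rank for every i, and let 𝐒 = [S_1,…,S_{r₁}] denote their column concatenation, with Aᵀ𝐒 having full row rank. Let P_1,…,P_{r₂} with P_j a q×τ₂(j) real matrix be such that P_jᵀBᵀ has full row rank for every j, and let 𝐏 = [P_1,…,P_{r₂}] denote their column concatenation, with B𝐏 having full row rank. Set p¹_i = Tr(S_iᵀAAᵀS_i)/‖Aᵀ𝐒‖_F² and p²_j = Tr(P_jᵀBᵀBP_j)/‖B𝐏‖_F². Let X*, X be m×n real matrices with C = AX*B, and define X⁺_{ij} = X − AᵀS_i(S_iᵀAAᵀS_i)⁻¹S_iᵀ(AXB − C)P_j(P_jᵀBᵀBP_j)⁻¹P_jᵀBᵀ. Then Σ_{i=1}^{r₁} Σ_{j=1}^{r₂} p¹_i p²_j ‖X⁺_{ij} − X*‖_F² ≤ ρ·‖X − X*‖_F², where ρ = 1 − λ_min(𝐒ᵀAAᵀ𝐒)·λ_min(𝐏ᵀBᵀB𝐏)/(‖Aᵀ𝐒‖_F²·‖B𝐏‖_F²).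 -/

import Mathlib

open Matrix
set_option linter.unusedSectionVars false
namespace Stmt18Aux

variable {k : Type*} [Fintype k] [DecidableEq k]

lemma psd_smul {M : Matrix k k ℝ} (hM : M.PosSemidef) {c : ℝ} (hc : 0 ≤ c) :
    (c • M).PosSemidef := by
  refine ⟨?_, fun x => ?_⟩
  · unfold Matrix.IsHermitian
    rw [conjTranspose_smul, hM.1]; simp
  · exact (hM.smul hc).2 x

lemma psd_sum {ι : Type*} (s : Finset ι) (f : ι → Matrix k k ℝ)
    (h : ∀ i ∈ s, (f i).PosSemidef) : (∑ i ∈ s, f i).PosSemidef := by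
  classical
  induction s using Finset.induction with
  | empty => simpa using Matrix.PosSemidef.zero
  | insert _ _ hx ih =>
    rw [Finset.sum_insert hx]
    exact ((h _ (Finset.mem_insert_self _ _)).add
      (ih fun i hi => h i (Finset.mem_insert_of_mem hi)))

lemma trace_mul_transpose_self {a b : Type*} [Fintype a] [Fintype b] (M : Matrix a b ℝ) :
    (M * Mᵀ).trace = ∑ i, ∑ j, (M i j)^2 := by
  simp [Matrix.trace, Matrix.mul_apply, Matrix.diag, sq]

lemma trace_mul_transpose_self_nonneg {a b : Type*} [Fintype a] [Fintype b]
    (M : Matrix a b ℝ) : 0 ≤ (M * Mᵀ).trace := by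
  rw [trace_mul_transpose_self]
  exact Finset.sum_nonneg fun i _ => Finset.sum_nonneg fun j _ => sq_nonneg _

lemma trace_psd_mul_nonneg {M N : Matrix k k ℝ} (hM : M.PosSemidef) (hN : N.PosSemidef) :
    0 ≤ (M * N).trace := by
  obtain ⟨C, rfl⟩ : ∃ C : Matrix k k ℝ, M = Cᴴ * C :=
    (by open scoped MatrixOrder in exact CStarAlgebra.nonneg_iff_eq_star_mul_self.mp hM.nonneg)
  obtain ⟨D, rfl⟩ : ∃ D : Matrix k k ℝ, N = Dᴴ * D :=
    (by open scoped MatrixOrder in exact CStarAlgebra.nonneg_iff_eq_star_mul_self.mp hN.nonneg)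
  have : (Cᴴ * C * (Dᴴ * D)).trace = ((C * Dᴴ) * (C * Dᴴ)ᵀ).trace := by
    rw [conjTranspose_eq_transpose_of_trivial, conjTranspose_eq_transpose_of_trivial,
      Matrix.transpose_mul, Matrix.transpose_transpose]
    rw [show Cᵀ * C * (Dᵀ * D) = Cᵀ * (C * Dᵀ * D) by noncomm_ring,
      Matrix.trace_mul_comm]
    congr 1
    noncomm_ring
  rw [this]
  exact trace_mul_transpose_self_nonneg _

lemma psd_eigen_nonneg {M : Matrix k k ℝ} (hM : M.PosSemidef) {v : k → ℝ} (hv : v ≠ 0)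
    {d : ℝ} (h : M *ᵥ v = d • v) : 0 ≤ d := by
  have h2 := hM.dotProduct_mulVec_nonneg v
  rw [h] at h2
  simp only [star_trivial, dotProduct_smul, smul_eq_mul] at h2
  have hpos : 0 < v ⬝ᵥ v := by
    have := (dotProduct_self_star_pos_iff (v := v)).mpr hv
    simpa using this
  exact nonneg_of_mul_nonneg_right (by linarith [h2]) hpos


lemma star_U_mul_U {H : Matrix k k ℝ} (hH : H.IsHermitian) :
    (star (hH.eigenvectorUnitary : Matrix k k ℝ)) * (hH.eigenvectorUnitary : Matrix k k ℝ) = 1 :=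
  Unitary.coe_star_mul_self hH.eigenvectorUnitary

lemma U_mul_star_U {H : Matrix k k ℝ} (hH : H.IsHermitian) :
    (hH.eigenvectorUnitary : Matrix k k ℝ) * (star (hH.eigenvectorUnitary : Matrix k k ℝ)) = 1 :=
  Unitary.coe_mul_star_self hH.eigenvectorUnitary

lemma spectral_real {H : Matrix k k ℝ} (hH : H.IsHermitian) :
    H = (hH.eigenvectorUnitary : Matrix k k ℝ) * diagonal hH.eigenvalues *
      (star (hH.eigenvectorUnitary : Matrix k k ℝ)) := by
  have := hH.spectral_theorem
  simpa using this

lemma psd_conj_diag {H : Matrix k k ℝ} (hH : H.IsHermitian) {f : k → ℝ} (hf : ∀ i, 0 ≤ f i) :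
    ((hH.eigenvectorUnitary : Matrix k k ℝ) * diagonal f *
      (star (hH.eigenvectorUnitary : Matrix k k ℝ))).PosSemidef := by
  rw [star_eq_conjTranspose]
  exact (Matrix.PosSemidef.diagonal hf).mul_mul_conjTranspose_same _

lemma trace_eq_sum_eigenvalues {H : Matrix k k ℝ} (hH : H.IsHermitian) :
    H.trace = ∑ i, hH.eigenvalues i := by
  conv_lhs => rw [spectral_real hH]
  rw [Matrix.trace_mul_cycle, star_U_mul_U hH, Matrix.one_mul, Matrix.trace_diagonal]

lemma herm_sub_smul_one_psd {H : Matrix k k ℝ} (hH : H.IsHermitian) {c : ℝ}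
    (hc : ∀ i, c ≤ hH.eigenvalues i) : (H - c • 1).PosSemidef := by
  have key : H - c • 1 = (hH.eigenvectorUnitary : Matrix k k ℝ) *
      diagonal (fun i => hH.eigenvalues i - c) *
      (star (hH.eigenvectorUnitary : Matrix k k ℝ)) := by
    have h1 : (c • (1 : Matrix k k ℝ)) = (hH.eigenvectorUnitary : Matrix k k ℝ) *
        diagonal (fun _ => c) * (star (hH.eigenvectorUnitary : Matrix k k ℝ)) := by
      rw [show (diagonal (fun _ => c) : Matrix k k ℝ) = c • 1 by simp [Matrix.smul_one_eq_diagonal]]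
      rw [mul_smul_comm, smul_mul_assoc, Matrix.mul_one, U_mul_star_U hH]
    conv_lhs => rw [spectral_real hH, h1]
    rw [← Matrix.sub_mul, ← Matrix.mul_sub, Matrix.diagonal_sub]
  rw [key]
  exact psd_conj_diag hH fun i => by linarith [hc i]

lemma trace_smul_sub_sq_psd {G : Matrix k k ℝ} (hG : G.PosSemidef) :
    (G.trace • G - G * G).PosSemidef := by
  have hH := hG.isHermitian
  set U := (hH.eigenvectorUnitary : Matrix k k ℝ) with hU
  obtain ⟨t, ht⟩ : ∃ t : ℝ, G.trace = t := ⟨_, rfl⟩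
  rw [ht]
  have hsq : G * G = U * diagonal (fun i => hH.eigenvalues i * hH.eigenvalues i) * star U := by
    conv_lhs => rw [spectral_real hH]
    rw [show U * diagonal hH.eigenvalues * star U * (U * diagonal hH.eigenvalues * star U)
      = U * (diagonal hH.eigenvalues * (star U * U) * diagonal hH.eigenvalues) * star U by
        simp only [Matrix.mul_assoc]]
    rw [star_U_mul_U hH]
    simp [Matrix.diagonal_mul_diagonal]
  have hsmul : t • G = U * diagonal (fun i => t * hH.eigenvalues i) * star U := by
    conv_lhs => rw [spectral_real hH]
    rw [show (diagonal fun i => t * hH.eigenvalues i) = t • diagonal hH.eigenvalues by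
      rw [← Matrix.diagonal_smul]; congr 1]
    rw [Matrix.mul_smul, Matrix.smul_mul]
  rw [hsmul, hsq, ← Matrix.sub_mul, ← Matrix.mul_sub, Matrix.diagonal_sub]
  refine psd_conj_diag hH fun i => ?_
  have h1 : 0 ≤ hH.eigenvalues i := hG.eigenvalues_nonneg i
  have h2 : hH.eigenvalues i ≤ G.trace := by
    rw [trace_eq_sum_eigenvalues hH]
    exact Finset.single_le_sum (fun j _ => hG.eigenvalues_nonneg j) (Finset.mem_univ i)
  nlinarith

lemma eigen_quad {M : Matrix k k ℝ} (hM : M.IsHermitian) {c : ℝ}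
    (h : (M * M - c • M).PosSemidef) (i : k) :
    c * hM.eigenvalues i ≤ hM.eigenvalues i * hM.eigenvalues i := by
  have hv : M *ᵥ ⇑(hM.eigenvectorBasis i) = hM.eigenvalues i • ⇑(hM.eigenvectorBasis i) :=
    hM.mulVec_eigenvectorBasis i
  have hmul : (M * M - c • M) *ᵥ ⇑(hM.eigenvectorBasis i) =
      (hM.eigenvalues i * hM.eigenvalues i - c * hM.eigenvalues i) • ⇑(hM.eigenvectorBasis i) := by
    rw [Matrix.sub_mulVec, ← Matrix.mulVec_mulVec, hv, Matrix.mulVec_smul, hv,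
      smul_mulVec, hv]
    rw [sub_smul, smul_smul, smul_smul]
  have hvne : (⇑(hM.eigenvectorBasis i) : k → ℝ) ≠ 0 := by
    have := hM.eigenvectorBasis.orthonormal.ne_zero i
    intro hcon
    apply this
    ext j
    exact congrFun hcon j
  have h0 := psd_eigen_nonneg h hvne hmul
  linarith

lemma isUnit_of_rank_eq_card (M : Matrix k k ℝ) (h : M.rank = Fintype.card k) : IsUnit M := by
  rw [← Matrix.mulVec_surjective_iff_isUnit]
  have : LinearMap.range M.mulVecLin = ⊤ := by
    apply Submodule.eq_top_of_finrank_eq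
    rw [← Matrix.rank, h, Module.finrank_fintype_fun_eq_card]
  intro y
  obtain ⟨x, hx⟩ := LinearMap.range_eq_top.mp this y
  exact ⟨x, hx⟩

lemma psd_mul_transpose_self {a b : Type*} [Fintype a] [Fintype b] (M : Matrix a b ℝ) :
    (M * Mᵀ).PosSemidef := by
  rw [← conjTranspose_eq_transpose_of_trivial]
  exact Matrix.posSemidef_self_mul_conjTranspose _

lemma psd_transpose_mul_self {a b : Type*} [Fintype a] [Fintype b] (M : Matrix a b ℝ) :
    (Mᵀ * M).PosSemidef := by
  rw [← conjTranspose_eq_transpose_of_trivial]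
  exact Matrix.posSemidef_conjTranspose_mul_self _

section Proj

variable {a b : Type*} [Fintype a] [Fintype b] [DecidableEq a]

lemma G_symm (N : Matrix a b ℝ) : (N * Nᵀ)ᵀ = N * Nᵀ := by
  rw [Matrix.transpose_mul, Matrix.transpose_transpose]

lemma G_inv_symm (N : Matrix a b ℝ) : ((N * Nᵀ)⁻¹)ᵀ = (N * Nᵀ)⁻¹ := by
  rw [Matrix.transpose_nonsing_inv, G_symm]

lemma G_mul_inv (N : Matrix a b ℝ) (hu : IsUnit (N * Nᵀ)) :
    (N * Nᵀ) * (N * Nᵀ)⁻¹ = 1 :=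
  Matrix.mul_nonsing_inv _ ((Matrix.isUnit_iff_isUnit_det _).mp hu)

lemma G_inv_mul (N : Matrix a b ℝ) (hu : IsUnit (N * Nᵀ)) :
    (N * Nᵀ)⁻¹ * (N * Nᵀ) = 1 :=
  Matrix.nonsing_inv_mul _ ((Matrix.isUnit_iff_isUnit_det _).mp hu)

lemma proj_symm (N : Matrix a b ℝ) :
    (Nᵀ * (N * Nᵀ)⁻¹ * N)ᵀ = Nᵀ * (N * Nᵀ)⁻¹ * N := by
  rw [Matrix.transpose_mul, Matrix.transpose_mul, Matrix.transpose_transpose, G_inv_symm,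
    Matrix.mul_assoc]

lemma proj_idem (N : Matrix a b ℝ) (hu : IsUnit (N * Nᵀ)) :
    (Nᵀ * (N * Nᵀ)⁻¹ * N) * (Nᵀ * (N * Nᵀ)⁻¹ * N) = Nᵀ * (N * Nᵀ)⁻¹ * N := by
  have : (Nᵀ * (N * Nᵀ)⁻¹ * N) * (Nᵀ * (N * Nᵀ)⁻¹ * N)
      = Nᵀ * ((N * Nᵀ)⁻¹ * ((N * Nᵀ) * ((N * Nᵀ)⁻¹ * N))) := by
    simp only [Matrix.mul_assoc]
  rw [this, ← Matrix.mul_assoc (N * Nᵀ)⁻¹ (N * Nᵀ), G_inv_mul N hu, Matrix.one_mul]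
  rw [Matrix.mul_assoc]

lemma proj_psd (N : Matrix a b ℝ) (hu : IsUnit (N * Nᵀ)) :
    (Nᵀ * (N * Nᵀ)⁻¹ * N).PosSemidef := by
  have h1 : ((N * Nᵀ)⁻¹).PosSemidef := (psd_mul_transpose_self N).inv
  have := h1.conjTranspose_mul_mul_same N
  rwa [conjTranspose_eq_transpose_of_trivial] at this

lemma proj_trace_bound (N : Matrix a b ℝ) (hu : IsUnit (N * Nᵀ)) :
    ((N * Nᵀ).trace • (Nᵀ * (N * Nᵀ)⁻¹ * N) - Nᵀ * N).PosSemidef := by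
  have h2 : ∀ X : Matrix a b ℝ, (N * Nᵀ) * ((N * Nᵀ)⁻¹ * X) = X := fun X => by
    rw [← Matrix.mul_assoc, G_mul_inv N hu, Matrix.one_mul]
  have hiG : Nᵀ * (N * Nᵀ)⁻¹ * (N * Nᵀ) = Nᵀ := by
    rw [Matrix.mul_assoc, G_inv_mul N hu, Matrix.mul_one]
  have key : (N * Nᵀ).trace • (Nᵀ * (N * Nᵀ)⁻¹ * N) - Nᵀ * N
      = (Nᵀ * (N * Nᵀ)⁻¹) * ((N * Nᵀ).trace • (N * Nᵀ) - (N * Nᵀ) * (N * Nᵀ)) *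
        (Nᵀ * (N * Nᵀ)⁻¹)ᵀ := by
    rw [Matrix.transpose_mul, G_inv_symm, Matrix.transpose_transpose, Matrix.mul_sub,
      Matrix.sub_mul]
    congr 1
    · rw [Matrix.mul_smul, Matrix.smul_mul, hiG, ← Matrix.mul_assoc]
    · rw [← Matrix.mul_assoc (Nᵀ * (N * Nᵀ)⁻¹) (N * Nᵀ) (N * Nᵀ), hiG, Matrix.mul_assoc, h2]
  rw [key]
  have hmid := trace_smul_sub_sq_psd (psd_mul_transpose_self N)
  have := hmid.mul_mul_conjTranspose_same (Nᵀ * (N * Nᵀ)⁻¹)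
  rwa [conjTranspose_eq_transpose_of_trivial] at this

end Proj

section Side

variable {k r : ℕ} {τ : Fin r → ℕ}

lemma concat_gram (N : ∀ i : Fin r, Matrix (Fin (τ i)) (Fin k) ℝ)
    (Nc : Matrix ((i : Fin r) × Fin (τ i)) (Fin k) ℝ)
    (hNc : ∀ (i : Fin r) (t : Fin (τ i)) (j : Fin k), Nc ⟨i, t⟩ j = N i t j) :
    Ncᵀ * Nc = ∑ i, (N i)ᵀ * N i := by
  ext x y
  rw [Matrix.sum_apply]
  simp only [Matrix.mul_apply, Matrix.transpose_apply]
  rw [← Finset.univ_sigma_univ, Finset.sum_sigma]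
  exact Finset.sum_congr rfl fun i _ => Finset.sum_congr rfl fun t _ => by rw [hNc, hNc]

lemma side_trace (N : ∀ i : Fin r, Matrix (Fin (τ i)) (Fin k) ℝ)
    (Nc : Matrix ((i : Fin r) × Fin (τ i)) (Fin k) ℝ)
    (hNc : ∀ (i : Fin r) (t : Fin (τ i)) (j : Fin k), Nc ⟨i, t⟩ j = N i t j) :
    (Nc * Ncᵀ).trace = ∑ i, (N i * (N i)ᵀ).trace := by
  rw [Matrix.trace_mul_comm, concat_gram N Nc hNc, Matrix.trace_sum]
  exact Finset.sum_congr rfl fun i _ => Matrix.trace_mul_comm _ _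

lemma side_trace_pos (Nc : Matrix ((i : Fin r) × Fin (τ i)) (Fin k) ℝ)
    (hr : (Ncᵀ).rank = k) (hk : 0 < k) : 0 < (Nc * Ncᵀ).trace := by
  have hne : Nc ≠ 0 := by
    intro h0
    rw [h0, Matrix.transpose_zero, Matrix.rank_zero] at hr
    omega
  rw [trace_mul_transpose_self]
  obtain ⟨i, j, hij⟩ : ∃ i j, Nc i j ≠ 0 := by
    by_contra hcon
    push_neg at hcon
    exact hne (Matrix.ext fun i j => hcon i j)
  have h1 : 0 < (Nc i j)^2 := by positivity
  have h2 : (Nc i j)^2 ≤ ∑ j', (Nc i j')^2 :=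
    Finset.single_le_sum (f := fun j' => (Nc i j')^2) (fun j' _ => sq_nonneg _)
      (Finset.mem_univ j)
  have h3 : ∑ j', (Nc i j')^2 ≤ ∑ i', ∑ j', (Nc i' j')^2 :=
    Finset.single_le_sum (f := fun i' => ∑ j', (Nc i' j')^2)
      (fun i' _ => Finset.sum_nonneg fun j' _ => sq_nonneg _) (Finset.mem_univ i)
  linarith

lemma side_psd (N : ∀ i : Fin r, Matrix (Fin (τ i)) (Fin k) ℝ)
    (Nc : Matrix ((i : Fin r) × Fin (τ i)) (Fin k) ℝ)
    (hNc : ∀ (i : Fin r) (t : Fin (τ i)) (j : Fin k), Nc ⟨i, t⟩ j = N i t j)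
    (hri : ∀ i, (N i).rank = τ i)
    (hr : (Ncᵀ).rank = k) (hk : 0 < k)
    (hH : (Nc * Ncᵀ).IsHermitian) :
    ((∑ i, ((N i * (N i)ᵀ).trace / (Nc * Ncᵀ).trace) •
        ((N i)ᵀ * (N i * (N i)ᵀ)⁻¹ * N i)) -
      ((⨅ a, hH.eigenvalues a) / (Nc * Ncᵀ).trace) • 1).PosSemidef := by
  set T := (Nc * Ncᵀ).trace with hT
  set lam := (⨅ a, hH.eigenvalues a) with hlam
  have hTpos : 0 < T := side_trace_pos Nc hr hk
  set M := Ncᵀ * Nc with hM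
  have hMpsd : M.PosSemidef := psd_transpose_mul_self Nc
  have hMh : M.IsHermitian := hMpsd.isHermitian
  have hMrank : M.rank = k := by
    have := Matrix.rank_self_mul_transpose (Ncᵀ)
    rw [Matrix.transpose_transpose] at this
    rw [hM, this, hr]
  have hc : ∀ a2, lam ≤ hH.eigenvalues a2 := fun a2 =>
    ciInf_le (Set.Finite.bddBelow (Set.finite_range _)) a2
  have hp1 : (Nc * Ncᵀ - lam • 1).PosSemidef := herm_sub_smul_one_psd hH hc
  have hp2 : (M * M - lam • M).PosSemidef := by
    have key : M * M - lam • M = Ncᵀ * (Nc * Ncᵀ - lam • 1) * Nc := by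
      rw [Matrix.mul_sub, Matrix.sub_mul]
      congr 1
      · rw [hM]; simp only [Matrix.mul_assoc]
      · rw [Matrix.mul_smul, Matrix.smul_mul, Matrix.mul_one, hM]
    rw [key]
    have := hp1.conjTranspose_mul_mul_same Nc
    rwa [conjTranspose_eq_transpose_of_trivial] at this
  have heig : ∀ i2, lam ≤ hMh.eigenvalues i2 := by
    intro i2
    have hquad := eigen_quad hMh hp2 i2
    have hnn : 0 ≤ hMh.eigenvalues i2 := hMpsd.eigenvalues_nonneg i2
    have hne : hMh.eigenvalues i2 ≠ 0 := by
      intro h0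
      have hlt : Fintype.card {j2 // hMh.eigenvalues j2 ≠ 0} < Fintype.card (Fin k) :=
        Fintype.card_subtype_lt (x := i2) (by simp [h0])
      rw [← hMh.rank_eq_card_non_zero_eigs, hMrank, Fintype.card_fin] at hlt
      omega
    exact le_of_mul_le_mul_right hquad (lt_of_le_of_ne hnn (Ne.symm hne))
  have hMl : (M - lam • 1).PosSemidef := herm_sub_smul_one_psd hMh heig
  have hui : ∀ i, IsUnit (N i * (N i)ᵀ) := fun i => by
    apply isUnit_of_rank_eq_card
    rw [Matrix.rank_self_mul_transpose, hri, Fintype.card_fin]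
  have key : (∑ i, ((N i * (N i)ᵀ).trace / T) • ((N i)ᵀ * (N i * (N i)ᵀ)⁻¹ * N i)) -
      (lam / T) • 1
      = (1/T) • ((∑ i, ((N i * (N i)ᵀ).trace • ((N i)ᵀ * (N i * (N i)ᵀ)⁻¹ * N i)
          - (N i)ᵀ * N i)) + (M - lam • 1)) := by
    rw [Finset.sum_sub_distrib, ← concat_gram N Nc hNc, ← hM, sub_add_sub_cancel,
      smul_sub, Finset.smul_sum]
    congr 1
    · exact Finset.sum_congr rfl fun i _ => by rw [smul_smul]; congr 1; field_simp
    · rw [smul_smul]; congr 1; field_simp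
  rw [key]
  refine psd_smul ?_ (by positivity)
  exact (psd_sum _ _ fun i _ => proj_trace_bound (N i) (hui i)).add hMl

end Side

section TraceAlg

variable {a b : Type*} [Fintype a] [Fintype b] [DecidableEq a] [DecidableEq b]

lemma key_trace (R : Matrix a b ℝ) (Z : Matrix a a ℝ) (W : Matrix b b ℝ)
    (hZs : Zᵀ = Z) (hZi : Z * Z = Z) (hWs : Wᵀ = W) (hWi : W * W = W) :
    ((R - Z * R * W)ᵀ * (R - Z * R * W)).trace
      = (Rᵀ * R).trace - (Rᵀ * (Z * R * W)).trace := by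
  have ht1 : ((Z * R * W)ᵀ * R).trace = (Rᵀ * (Z * R * W)).trace := by
    have h : (Z * R * W)ᵀ * R = (Rᵀ * (Z * R * W))ᵀ := by
      rw [Matrix.transpose_mul (Rᵀ) (Z * R * W), Matrix.transpose_transpose]
    rw [h, Matrix.trace_transpose]
  have ht2 : ((Z * R * W)ᵀ * (Z * R * W)).trace = (Rᵀ * (Z * R * W)).trace := by
    have h : (Z * R * W)ᵀ * (Z * R * W) = W * ((Rᵀ * (Z * R)) * W) := by
      rw [Matrix.transpose_mul, Matrix.transpose_mul, hZs, hWs]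
      rw [show W * (Rᵀ * Z) * (Z * R * W) = W * ((Rᵀ * ((Z * Z) * R)) * W) by
        simp only [Matrix.mul_assoc]]
      rw [hZi]
    rw [h, Matrix.trace_mul_comm, Matrix.mul_assoc, hWi]
    rw [show Rᵀ * (Z * R) * W = Rᵀ * (Z * R * W) by simp only [Matrix.mul_assoc]]
  rw [Matrix.transpose_sub, Matrix.sub_mul, Matrix.mul_sub, Matrix.mul_sub,
    Matrix.trace_sub, Matrix.trace_sub, Matrix.trace_sub]
  linarith [ht1, ht2]

lemma trace_ineq1 (R : Matrix a b ℝ) (Zb : Matrix a a ℝ) (Wb : Matrix b b ℝ) (c : ℝ)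
    (hZ : (Zb - c • 1).PosSemidef) (hW : Wb.PosSemidef) :
    c * (Rᵀ * (R * Wb)).trace ≤ (Rᵀ * (Zb * (R * Wb))).trace := by
  have hpsd : (Rᵀ * (Zb - c • 1) * R).PosSemidef := by
    have := hZ.conjTranspose_mul_mul_same R
    rwa [conjTranspose_eq_transpose_of_trivial] at this
  have h := trace_psd_mul_nonneg hpsd hW
  have heq : (Rᵀ * (Zb - c • 1) * R) * Wb
      = Rᵀ * (Zb * (R * Wb)) - c • (Rᵀ * (R * Wb)) := by
    simp only [Matrix.mul_sub, Matrix.sub_mul, Matrix.mul_smul, Matrix.smul_mul,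
      Matrix.mul_one, Matrix.one_mul, Matrix.mul_assoc]
  rw [heq, Matrix.trace_sub, Matrix.trace_smul, smul_eq_mul] at h
  linarith

lemma trace_ineq2 (R : Matrix a b ℝ) (Wb : Matrix b b ℝ) (c : ℝ)
    (hW : (Wb - c • 1).PosSemidef) :
    c * (Rᵀ * R).trace ≤ (Rᵀ * (R * Wb)).trace := by
  have h := trace_psd_mul_nonneg (psd_transpose_mul_self R) hW
  have heq : (Rᵀ * R) * (Wb - c • 1) = Rᵀ * (R * Wb) - c • (Rᵀ * R) := by
    simp only [Matrix.mul_sub, Matrix.mul_smul, Matrix.mul_one, Matrix.mul_assoc]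
  rw [heq, Matrix.trace_sub, Matrix.trace_smul, smul_eq_mul] at h
  linarith

end TraceAlg

lemma eigenvalues_congr {k : Type*} [Fintype k] [DecidableEq k] {M₁ M₂ : Matrix k k ℝ}
    (h : M₁ = M₂) (h₁ : M₁.IsHermitian) (h₂ : M₂.IsHermitian) :
    h₁.eigenvalues = h₂.eigenvalues := by subst h; rfl

end Stmt18Aux

open Stmt18Aux

/-- convergence with convenient probabilities for a complete
discrete sampling pair, one-step expected decrease. -/
theorem stmt_18 {m n p q r₁ r₂ : ℕ} (τ₁ : Fin r₁ → ℕ) (τ₂ : Fin r₂ → ℕ)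
    (A : Matrix (Fin p) (Fin m) ℝ) (B : Matrix (Fin n) (Fin q) ℝ)
    (S : ∀ i : Fin r₁, Matrix (Fin p) (Fin (τ₁ i)) ℝ)
    (P : ∀ j : Fin r₂, Matrix (Fin q) (Fin (τ₂ j)) ℝ)
    (hSi : ∀ i, ((S i)ᵀ * A).rank = τ₁ i)
    (hPj : ∀ j, ((P j)ᵀ * Bᵀ).rank = τ₂ j)
    (Sc : Matrix (Fin p) ((i : Fin r₁) × Fin (τ₁ i)) ℝ)
    (hSc : Sc = Matrix.of fun a kt => S kt.1 a kt.2)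
    (Pc : Matrix (Fin q) ((j : Fin r₂) × Fin (τ₂ j)) ℝ)
    (hPc : Pc = Matrix.of fun a kt => P kt.1 a kt.2)
    (hS : (Aᵀ * Sc).rank = m) (hP : (B * Pc).rank = n)
    (Xs X : Matrix (Fin m) (Fin n) ℝ) :
    let C : Matrix (Fin p) (Fin q) ℝ := A * Xs * B
    let Xp : Fin r₁ → Fin r₂ → Matrix (Fin m) (Fin n) ℝ := fun i j =>
      X - Aᵀ * S i * ((S i)ᵀ * A * Aᵀ * S i)⁻¹ * (S i)ᵀ *
        (A * X * B - C) * P j * ((P j)ᵀ * Bᵀ * B * P j)⁻¹ * (P j)ᵀ * Bᵀ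
    ∀ (hSA : (Scᵀ * A * Aᵀ * Sc).IsHermitian) (hPB : (Pcᵀ * Bᵀ * B * Pc).IsHermitian),
      ∑ i, ∑ j,
        (Matrix.trace ((S i)ᵀ * A * Aᵀ * S i) / Matrix.trace (Scᵀ * A * Aᵀ * Sc)) *
          (Matrix.trace ((P j)ᵀ * Bᵀ * B * P j) / Matrix.trace (Pcᵀ * Bᵀ * B * Pc)) *
          Matrix.trace ((Xp i j - Xs)ᵀ * (Xp i j - Xs))
      ≤ (1 - (⨅ a, hSA.eigenvalues a) * (⨅ b, hPB.eigenvalues b) /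
            (Matrix.trace (Scᵀ * A * Aᵀ * Sc) * Matrix.trace (Pcᵀ * Bᵀ * B * Pc))) *
          Matrix.trace ((X - Xs)ᵀ * (X - Xs)) := by
  intro C Xp hSA hPB
  by_cases hm : m = 0
  · subst hm
    have hz : ∀ (Y : Matrix (Fin 0) (Fin n) ℝ), (Yᵀ * Y).trace = 0 := by
      intro Y
      have hY : Yᵀ * Y = 0 := by ext i j; simp [Matrix.mul_apply]
      rw [hY, Matrix.trace_zero]
    simp only [hz]
    simp
  by_cases hn : n = 0
  · subst hn
    have hz : ∀ (Y : Matrix (Fin m) (Fin 0) ℝ), (Yᵀ * Y).trace = 0 := by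
      intro Y
      simp [Matrix.trace]
    simp only [hz]
    simp
  have hm' : 0 < m := Nat.pos_of_ne_zero hm
  have hn' : 0 < n := Nat.pos_of_ne_zero hn
  -- bridge to N-form
  have e₁ : Scᵀ * A * Aᵀ * Sc = (Scᵀ * A) * (Scᵀ * A)ᵀ := by
    rw [Matrix.transpose_mul, Matrix.transpose_transpose, ← Matrix.mul_assoc]
  have e₂ : Pcᵀ * Bᵀ * B * Pc = (Pcᵀ * Bᵀ) * (Pcᵀ * Bᵀ)ᵀ := by
    rw [Matrix.transpose_mul, Matrix.transpose_transpose, Matrix.transpose_transpose,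
      ← Matrix.mul_assoc]
  have e₁i : ∀ i, (S i)ᵀ * A * Aᵀ * S i = ((S i)ᵀ * A) * ((S i)ᵀ * A)ᵀ := fun i => by
    rw [Matrix.transpose_mul, Matrix.transpose_transpose, ← Matrix.mul_assoc]
  have e₂j : ∀ j, (P j)ᵀ * Bᵀ * B * P j = ((P j)ᵀ * Bᵀ) * ((P j)ᵀ * Bᵀ)ᵀ := fun j => by
    rw [Matrix.transpose_mul, Matrix.transpose_transpose, Matrix.transpose_transpose,
      ← Matrix.mul_assoc]
  have hH₁ : ((Scᵀ * A) * (Scᵀ * A)ᵀ).IsHermitian := (psd_mul_transpose_self _).isHermitian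
  have hH₂ : ((Pcᵀ * Bᵀ) * (Pcᵀ * Bᵀ)ᵀ).IsHermitian := (psd_mul_transpose_self _).isHermitian
  have hee₁ : (⨅ a, hSA.eigenvalues a) = ⨅ a, hH₁.eigenvalues a := by
    rw [eigenvalues_congr e₁ hSA hH₁]
  have hee₂ : (⨅ b, hPB.eigenvalues b) = ⨅ b, hH₂.eigenvalues b := by
    rw [eigenvalues_congr e₂ hPB hH₂]
  rw [hee₁, hee₂]
  simp only [e₁, e₂, e₁i, e₂j]
  -- abbreviations
  set T₁ := ((Scᵀ * A) * (Scᵀ * A)ᵀ).trace with hT₁def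
  set T₂ := ((Pcᵀ * Bᵀ) * (Pcᵀ * Bᵀ)ᵀ).trace with hT₂def
  set lam₁ := ⨅ a, hH₁.eigenvalues a with hlam₁def
  set lam₂ := ⨅ b, hH₂.eigenvalues b with hlam₂def
  set R := X - Xs with hRdef
  -- entry/rank facts
  have hNc₁ : ∀ (i : Fin r₁) (t : Fin (τ₁ i)) (j : Fin m),
      (Scᵀ * A) ⟨i, t⟩ j = ((S i)ᵀ * A) t j := by
    intro i t j
    rw [hSc]
    simp [Matrix.mul_apply]
  have hNc₂ : ∀ (j : Fin r₂) (t : Fin (τ₂ j)) (i : Fin n),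
      (Pcᵀ * Bᵀ) ⟨j, t⟩ i = ((P j)ᵀ * Bᵀ) t i := by
    intro j t i
    rw [hPc]
    simp [Matrix.mul_apply]
  have hr₁ : ((Scᵀ * A)ᵀ).rank = m := by
    rw [Matrix.transpose_mul, Matrix.transpose_transpose]; exact hS
  have hr₂ : ((Pcᵀ * Bᵀ)ᵀ).rank = n := by
    rw [Matrix.transpose_mul, Matrix.transpose_transpose]; exact hP
  have hne₁ : Nonempty ((i : Fin r₁) × Fin (τ₁ i)) := by
    by_contra hcon
    rw [not_nonempty_iff] at hcon
    have hle := Matrix.rank_le_card_width ((Scᵀ * A)ᵀ)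
    rw [hr₁] at hle
    simp [Fintype.card_eq_zero] at hle
    omega
  have hne₂ : Nonempty ((j : Fin r₂) × Fin (τ₂ j)) := by
    by_contra hcon
    rw [not_nonempty_iff] at hcon
    have hle := Matrix.rank_le_card_width ((Pcᵀ * Bᵀ)ᵀ)
    rw [hr₂] at hle
    simp [Fintype.card_eq_zero] at hle
    omega
  have hT₁pos : 0 < T₁ := side_trace_pos (Scᵀ * A) hr₁ hm'
  have hT₂pos : 0 < T₂ := side_trace_pos (Pcᵀ * Bᵀ) hr₂ hn'
  have hlam₁0 : 0 ≤ lam₁ := by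
    haveI := hne₁
    exact le_ciInf fun a2 => (psd_mul_transpose_self (Scᵀ * A)).eigenvalues_nonneg a2
  have hlam₂0 : 0 ≤ lam₂ := by
    haveI := hne₂
    exact le_ciInf fun b2 => (psd_mul_transpose_self (Pcᵀ * Bᵀ)).eigenvalues_nonneg b2
  have hui : ∀ i, IsUnit (((S i)ᵀ * A) * ((S i)ᵀ * A)ᵀ) := fun i => by
    apply isUnit_of_rank_eq_card
    rw [Matrix.rank_self_mul_transpose, hSi, Fintype.card_fin]
  have huj : ∀ j, IsUnit (((P j)ᵀ * Bᵀ) * ((P j)ᵀ * Bᵀ)ᵀ) := fun j => by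
    apply isUnit_of_rank_eq_card
    rw [Matrix.rank_self_mul_transpose, hPj, Fintype.card_fin]
  -- projections
  set Z : Fin r₁ → Matrix (Fin m) (Fin m) ℝ := fun i =>
    ((S i)ᵀ * A)ᵀ * (((S i)ᵀ * A) * ((S i)ᵀ * A)ᵀ)⁻¹ * ((S i)ᵀ * A) with hZdef
  set W : Fin r₂ → Matrix (Fin n) (Fin n) ℝ := fun j =>
    ((P j)ᵀ * Bᵀ)ᵀ * (((P j)ᵀ * Bᵀ) * ((P j)ᵀ * Bᵀ)ᵀ)⁻¹ * ((P j)ᵀ * Bᵀ) with hWdef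
  have hXp : ∀ i j, Xp i j - Xs = R - Z i * R * W j := by
    intro i j
    have hXpv : Xp i j = X - Aᵀ * S i * ((S i)ᵀ * A * Aᵀ * S i)⁻¹ * (S i)ᵀ *
        (A * X * B - C) * P j * ((P j)ᵀ * Bᵀ * B * P j)⁻¹ * (P j)ᵀ * Bᵀ := rfl
    have hCv : C = A * Xs * B := rfl
    rw [hXpv, hCv, sub_right_comm, ← hRdef]
    congr 1
    rw [show A * X * B - A * Xs * B = A * R * B from by
      rw [hRdef, Matrix.mul_sub, Matrix.sub_mul]]
    rw [hZdef, hWdef]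
    simp only [Matrix.transpose_mul, Matrix.transpose_transpose, Matrix.mul_assoc]
  have hterm : ∀ i j, ((Xp i j - Xs)ᵀ * (Xp i j - Xs)).trace
      = (Rᵀ * R).trace - (Rᵀ * (Z i * R * W j)).trace := by
    intro i j
    rw [hXp i j]
    refine key_trace R (Z i) (W j) ?_ ?_ ?_ ?_
    · rw [hZdef]; exact proj_symm _
    · rw [hZdef]; exact proj_idem _ (hui i)
    · rw [hWdef]; exact proj_symm _
    · rw [hWdef]; exact proj_idem _ (huj j)
  -- scalar abbreviations
  have hstep : ∀ i j,
      ((((S i)ᵀ * A) * ((S i)ᵀ * A)ᵀ).trace / T₁) * ((((P j)ᵀ * Bᵀ) * ((P j)ᵀ * Bᵀ)ᵀ).trace / T₂) *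
        ((Xp i j - Xs)ᵀ * (Xp i j - Xs)).trace
      = ((((S i)ᵀ * A) * ((S i)ᵀ * A)ᵀ).trace / T₁) * ((((P j)ᵀ * Bᵀ) * ((P j)ᵀ * Bᵀ)ᵀ).trace / T₂) *
          (Rᵀ * R).trace
        - ((((S i)ᵀ * A) * ((S i)ᵀ * A)ᵀ).trace / T₁) * ((((P j)ᵀ * Bᵀ) * ((P j)ᵀ * Bᵀ)ᵀ).trace / T₂) *
          (Rᵀ * (Z i * R * W j)).trace := by
    intro i j
    rw [hterm i j]
    ring
  simp only [hstep, Finset.sum_sub_distrib]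
  -- sums of probabilities
  have hp1 : ∑ i, (((S i)ᵀ * A) * ((S i)ᵀ * A)ᵀ).trace / T₁ = 1 := by
    rw [← Finset.sum_div, ← side_trace (fun i => (S i)ᵀ * A) (Scᵀ * A) hNc₁, ← hT₁def,
      div_self hT₁pos.ne']
  have hq1 : ∑ j, (((P j)ᵀ * Bᵀ) * ((P j)ᵀ * Bᵀ)ᵀ).trace / T₂ = 1 := by
    rw [← Finset.sum_div, ← side_trace (fun j => (P j)ᵀ * Bᵀ) (Pcᵀ * Bᵀ) hNc₂, ← hT₂def,
      div_self hT₂pos.ne']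
  have hA1 : ∑ i, ∑ j,
      ((((S i)ᵀ * A) * ((S i)ᵀ * A)ᵀ).trace / T₁) * ((((P j)ᵀ * Bᵀ) * ((P j)ᵀ * Bᵀ)ᵀ).trace / T₂) *
        (Rᵀ * R).trace = (Rᵀ * R).trace := by
    have hin : ∀ i, ∑ j,
        ((((S i)ᵀ * A) * ((S i)ᵀ * A)ᵀ).trace / T₁) * ((((P j)ᵀ * Bᵀ) * ((P j)ᵀ * Bᵀ)ᵀ).trace / T₂) *
          (Rᵀ * R).trace
        = ((((S i)ᵀ * A) * ((S i)ᵀ * A)ᵀ).trace / T₁) * (Rᵀ * R).trace := by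
      intro i
      rw [← Finset.sum_mul, ← Finset.mul_sum, hq1, mul_one]
    simp only [hin]
    rw [← Finset.sum_mul, hp1, one_mul]
  -- averaged projections
  set Zb : Matrix (Fin m) (Fin m) ℝ :=
    ∑ i, ((((S i)ᵀ * A) * ((S i)ᵀ * A)ᵀ).trace / T₁) • Z i with hZbdef
  set Wb : Matrix (Fin n) (Fin n) ℝ :=
    ∑ j, ((((P j)ᵀ * Bᵀ) * ((P j)ᵀ * Bᵀ)ᵀ).trace / T₂) • W j with hWbdef
  clear_value Zb Wb
  have hinner : ∀ i, ∑ j,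
      ((((S i)ᵀ * A) * ((S i)ᵀ * A)ᵀ).trace / T₁) * ((((P j)ᵀ * Bᵀ) * ((P j)ᵀ * Bᵀ)ᵀ).trace / T₂) *
        (Rᵀ * (Z i * R * W j)).trace
      = ((((S i)ᵀ * A) * ((S i)ᵀ * A)ᵀ).trace / T₁) * (Rᵀ * (Z i * (R * Wb))).trace := by
    intro i
    rw [hWbdef, Matrix.mul_sum, Matrix.mul_sum, Matrix.mul_sum, Matrix.trace_sum,
      Finset.mul_sum]
    refine Finset.sum_congr rfl fun j _ => ?_
    rw [Matrix.mul_smul, Matrix.mul_smul, Matrix.mul_smul, Matrix.trace_smul, smul_eq_mul,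
      Matrix.mul_assoc (Z i) R (W j)]
    ring
  have hF : ∑ i, ∑ j,
      ((((S i)ᵀ * A) * ((S i)ᵀ * A)ᵀ).trace / T₁) * ((((P j)ᵀ * Bᵀ) * ((P j)ᵀ * Bᵀ)ᵀ).trace / T₂) *
        (Rᵀ * (Z i * R * W j)).trace
      = (Rᵀ * (Zb * (R * Wb))).trace := by
    simp only [hinner]
    rw [hZbdef, Matrix.sum_mul, Matrix.mul_sum, Matrix.trace_sum]
    refine Finset.sum_congr rfl fun i _ => ?_
    rw [Matrix.smul_mul, Matrix.mul_smul, Matrix.trace_smul, smul_eq_mul]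
  rw [hA1, hF]
  -- positive semidefinite facts
  have hZbpsd : (Zb - (lam₁ / T₁) • 1).PosSemidef := by
    rw [hZbdef, hZdef, hlam₁def, hT₁def]
    exact side_psd (fun i => (S i)ᵀ * A) (Scᵀ * A) hNc₁ hSi hr₁ hm' hH₁
  have hWbpsd₂ : (Wb - (lam₂ / T₂) • 1).PosSemidef := by
    rw [hWbdef, hWdef, hlam₂def, hT₂def]
    exact side_psd (fun j => (P j)ᵀ * Bᵀ) (Pcᵀ * Bᵀ) hNc₂ hPj hr₂ hn' hH₂
  have hWbpsd : Wb.PosSemidef := by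
    rw [hWbdef]
    refine psd_sum _ _ fun j _ => psd_smul ?_ ?_
    · rw [hWdef]; exact proj_psd _ (huj j)
    · exact div_nonneg (trace_mul_transpose_self_nonneg _) hT₂pos.le
  -- trace inequalities
  have hineq1 : (lam₁ / T₁) * (Rᵀ * (R * Wb)).trace ≤ (Rᵀ * (Zb * (R * Wb))).trace :=
    trace_ineq1 R Zb Wb _ hZbpsd hWbpsd
  have hineq2 : (lam₂ / T₂) * (Rᵀ * R).trace ≤ (Rᵀ * (R * Wb)).trace :=
    trace_ineq2 R Wb _ hWbpsd₂
  have ha0 : 0 ≤ (Rᵀ * R).trace := by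
    rw [Matrix.trace_mul_comm]
    exact trace_mul_transpose_self_nonneg R
  have hc₁0 : 0 ≤ lam₁ / T₁ := div_nonneg hlam₁0 hT₁pos.le
  have hchain : (lam₁ / T₁) * ((lam₂ / T₂) * (Rᵀ * R).trace) ≤ (Rᵀ * (Zb * (R * Wb))).trace :=
    le_trans (mul_le_mul_of_nonneg_left hineq2 hc₁0) hineq1
  have hconst : (lam₁ / T₁) * ((lam₂ / T₂) * (Rᵀ * R).trace)
      = (lam₁ * lam₂ / (T₁ * T₂)) * (Rᵀ * R).trace := by
    field_simp
  linarith
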